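/- Let f : ℝ^d → ℝ be twice continuously differentiable with ∇²f(x) positive definite for all x, attain its minimum f⋆, and be μ̂-relatively convex and L̂-relatively smooth with L̂ ≥ μ̂ > 0 (for all x, y: (μ̂/2)(x−y)ᵀ∇²f(y)(x−y) ≤ f(x) − f(y) − ∇f(y)ᵀ(x−y) ≤ (L̂/2)(x−y)ᵀ∇²f(y)(x−y)). Fix x ∈ ℝ^d with g := ∇f(x) ≠ 0 and write H := ∇²f(x). Let D be a probability measure on ℝ^d \ {0} and define η := ∫ (uᵀg)²/((uᵀHu)·(gᵀH⁻¹g)) dD(u). Then the exact-derivative CARS step x_ED(u) = x − (uᵀg/(L̂·uᵀHu))·u satisfies ∫ f(x_ED(u)) dD(u) − f⋆ ≤ (1 − η·μ̂/L̂)·(f(x) − f⋆). In particular, for each fixed nonzero u, f(x_ED(u)) ≤ f(x) − (1/(2L̂))·(uᵀg)²/(uᵀHu). -/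

import Mathlib

open scoped RealInnerProductSpace
open MeasureTheory

set_option maxHeartbeats 1000000

/-- (Expected descent of CARS with exact derivatives.)  Let `f : ℝ^d → ℝ` be
twice continuously differentiable with positive definite Hessian `Hf x` everywhere, attain its
minimum `f⋆`, and be `μ̂`-relatively convex and `L̂`-relatively smooth with `L̂ ≥ μ̂ > 0`.
Fix `x` with `g = ∇f(x) ≠ 0`, write `H = ∇²f(x)`, and let `D` be a probability measure on
`ℝ^d \ {0}` with `η = ∫ (uᵀg)²/((uᵀHu)(gᵀH⁻¹g)) dD(u)`.  Then the exact-derivative CARS step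
`x_ED(u) = x − (uᵀg/(L̂·uᵀHu))·u` satisfies
`∫ f(x_ED(u)) dD(u) − f⋆ ≤ (1 − η·μ̂/L̂)·(f(x) − f⋆)`, and for each fixed nonzero `u`,
`f(x_ED(u)) ≤ f(x) − (1/(2L̂))·(uᵀg)²/(uᵀHu)`. -/
theorem cars_exact_derivative_descent (d : ℕ)
    (f : EuclideanSpace ℝ (Fin d) → ℝ) (hf : ContDiff ℝ 2 f)
    (Hf : EuclideanSpace ℝ (Fin d) → (EuclideanSpace ℝ (Fin d) ≃L[ℝ] EuclideanSpace ℝ (Fin d)))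
    (hHf : ∀ x u v : EuclideanSpace ℝ (Fin d), ⟪Hf x u, v⟫ = iteratedFDeriv ℝ 2 f x ![u, v])
    (hpd : ∀ (x u : EuclideanSpace ℝ (Fin d)), u ≠ 0 → 0 < ⟪Hf x u, u⟫)
    (fstar : ℝ) (hmin : ∀ y, fstar ≤ f y) (hattain : ∃ y, f y = fstar)
    (μhat Lhat : ℝ) (hμhat : 0 < μhat) (hμLhat : μhat ≤ Lhat)
    (hrel : ∀ x y : EuclideanSpace ℝ (Fin d),
      μhat / 2 * ⟪Hf y (x - y), x - y⟫ ≤ f x - f y - ⟪gradient f y, x - y⟫ ∧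
      f x - f y - ⟪gradient f y, x - y⟫ ≤ Lhat / 2 * ⟪Hf y (x - y), x - y⟫)
    (x : EuclideanSpace ℝ (Fin d)) (hgx : gradient f x ≠ 0)
    (D : Measure (EuclideanSpace ℝ (Fin d))) [IsProbabilityMeasure D] (hD0 : D {0} = 0) :
    ((∫ u, f (x - (⟪u, gradient f x⟫ / (Lhat * ⟪Hf x u, u⟫)) • u) ∂D) - fstar ≤
      (1 - (∫ u, ⟪u, gradient f x⟫ ^ 2 /
              (⟪Hf x u, u⟫ * ⟪(Hf x).symm (gradient f x), gradient f x⟫) ∂D) *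
            μhat / Lhat) * (f x - fstar)) ∧
    ∀ u : EuclideanSpace ℝ (Fin d), u ≠ 0 →
      f (x - (⟪u, gradient f x⟫ / (Lhat * ⟪Hf x u, u⟫)) • u) ≤
        f x - 1 / (2 * Lhat) * (⟪u, gradient f x⟫ ^ 2 / ⟪Hf x u, u⟫) := by
  have hL : 0 < Lhat := lt_of_lt_of_le hμhat hμLhat
  set g : EuclideanSpace ℝ (Fin d) := gradient f x with hgdef
  set w : EuclideanSpace ℝ (Fin d) := (Hf x).symm g with hwdef
  -- symmetry of the Hessian
  have hsym : ∀ y u v : EuclideanSpace ℝ (Fin d), ⟪Hf y u, v⟫ = ⟪Hf y v, u⟫ := by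
    intro y u v
    rw [hHf, hHf, iteratedFDeriv_two_apply, iteratedFDeriv_two_apply]
    have h := ((hf.contDiffAt (x := y)).isSymmSndFDerivAt (by simp [minSmoothness_of_isRCLikeNormedField])).eq u v
    simpa using h
  have hHw : Hf x w = g := (Hf x).apply_symm_apply g
  have hw0 : w ≠ 0 := by
    intro h
    apply hgx
    have := congrArg (Hf x) h
    rw [hHw] at this
    simpa using this
  have hG : 0 < ⟪w, g⟫ := by
    have h := hpd x w hw0
    rwa [hHw, real_inner_comm] at h
  -- nonnegativity of the Hessian quadratic form
  have hq0 : ∀ u : EuclideanSpace ℝ (Fin d), 0 ≤ ⟪Hf x u, u⟫ := by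
    intro u
    rcases eq_or_ne u 0 with h | h
    · simp [h]
    · exact (hpd x u h).le
  -- key product identities
  have hBw : ∀ u : EuclideanSpace ℝ (Fin d), ⟪Hf x u, w⟫ = ⟪u, g⟫ := by
    intro u
    rw [hsym, hHw, real_inner_comm]
  -- Cauchy–Schwarz for the Hessian form
  have hCS : ∀ u : EuclideanSpace ℝ (Fin d), ⟪u, g⟫ ^ 2 ≤ ⟪Hf x u, u⟫ * ⟪w, g⟫ := by
    intro u
    have hforall : ∀ t : ℝ,
        0 ≤ ⟪Hf x u, u⟫ * (t * t) + (2 * ⟪u, g⟫) * t + ⟪w, g⟫ := by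
      intro t
      have hnn : 0 ≤ ⟪Hf x (t • u + w), t • u + w⟫ := hq0 _
      have hexp : ⟪Hf x (t • u + w), t • u + w⟫
          = ⟪Hf x u, u⟫ * (t * t) + (2 * ⟪u, g⟫) * t + ⟪w, g⟫ := by
        have e1 : ⟪Hf x w, u⟫ = ⟪u, g⟫ := by rw [hHw, real_inner_comm]
        have e2 : ⟪Hf x w, w⟫ = ⟪w, g⟫ := by rw [hHw, real_inner_comm]
        simp only [map_add, _root_.map_smul, inner_add_left, inner_add_right,
          real_inner_smul_left, real_inner_smul_right, hBw u, e1, e2]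
        ring
      linarith [hexp ▸ hnn]
    have hd := discrim_le_zero hforall
    rw [discrim] at hd
    nlinarith [hd]
  -- suboptimality gap bound: f x - fstar ≤ ⟪w, g⟫ / (2 μ̂)
  have hgap : 2 * μhat * (f x - fstar) ≤ ⟪w, g⟫ := by
    obtain ⟨y, hy⟩ := hattain
    have h1 := (hrel y x).1
    rw [← hgdef, hy] at h1
    set sv : EuclideanSpace ℝ (Fin d) := y - x with hsv
    have hnn : 0 ≤ ⟪Hf x (μhat • sv + w), μhat • sv + w⟫ := hq0 _
    have hexp : ⟪Hf x (μhat • sv + w), μhat • sv + w⟫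
        = μhat ^ 2 * ⟪Hf x sv, sv⟫ + 2 * μhat * ⟪g, sv⟫ + ⟪w, g⟫ := by
      have e1 : ⟪Hf x w, sv⟫ = ⟪g, sv⟫ := by rw [hHw]
      have e2 : ⟪Hf x w, w⟫ = ⟪w, g⟫ := by rw [hHw, real_inner_comm]
      have e3 : ⟪Hf x sv, w⟫ = ⟪g, sv⟫ := by rw [hBw sv, real_inner_comm]
      simp only [map_add, _root_.map_smul, inner_add_left, inner_add_right,
        real_inner_smul_left, real_inner_smul_right, e1, e2, e3]
      ring
    rw [hexp] at hnn
    nlinarith [h1, hnn, hmin y]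
  -- the pointwise descent statement (second conjunct)
  have descent : ∀ u : EuclideanSpace ℝ (Fin d), u ≠ 0 →
      f (x - (⟪u, g⟫ / (Lhat * ⟪Hf x u, u⟫)) • u) ≤
        f x - 1 / (2 * Lhat) * (⟪u, g⟫ ^ 2 / ⟪Hf x u, u⟫) := by
    intro u hu
    have hq : 0 < ⟪Hf x u, u⟫ := hpd x u hu
    set s : ℝ := ⟪u, g⟫ with hs
    set q : ℝ := ⟪Hf x u, u⟫ with hqdef
    set c : ℝ := s / (Lhat * q) with hc
    have h2 := (hrel (x - c • u) x).2
    rw [← hgdef] at h2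
    have hxy : x - c • u - x = -(c • u) := by abel
    rw [hxy] at h2
    have e1 : ⟪g, -(c • u)⟫ = -(c * ⟪g, u⟫) := by
      rw [inner_neg_right, real_inner_smul_right]
    have e2 : ⟪Hf x (-(c • u)), -(c • u)⟫ = c ^ 2 * q := by
      rw [_root_.map_neg, inner_neg_neg, _root_.map_smul, real_inner_smul_left,
        real_inner_smul_right, ← hqdef]
      ring
    rw [e1, e2] at h2
    have hgu : ⟪g, u⟫ = s := by rw [hs, real_inner_comm]
    rw [hgu] at h2
    have key : c * s - Lhat / 2 * (c ^ 2 * q) = 1 / (2 * Lhat) * (s ^ 2 / q) := by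
      rw [hc]
      field_simp
      ring
    linarith [h2, key]
  refine ⟨?_, descent⟩
  -- now the expected descent
  set Δ : ℝ := f x - fstar with hΔ
  have hΔ0 : 0 ≤ Δ := sub_nonneg.2 (hmin x)
  set ρ : EuclideanSpace ℝ (Fin d) → ℝ :=
    fun u => ⟪u, g⟫ ^ 2 / (⟪Hf x u, u⟫ * ⟪w, g⟫) with hρdef
  set φ : EuclideanSpace ℝ (Fin d) → ℝ :=
    fun u => f (x - (⟪u, g⟫ / (Lhat * ⟪Hf x u, u⟫)) • u) with hφdef
  have hρ0 : ∀ u, 0 ≤ ρ u := fun u =>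
    div_nonneg (sq_nonneg _) (mul_nonneg (hq0 u) hG.le)
  have hρ1 : ∀ u, ρ u ≤ 1 := by
    intro u
    rcases eq_or_ne u 0 with h | h
    · simp [hρdef, h]
    · rw [hρdef]
      exact div_le_one_of_le₀ (hCS u) (mul_nonneg (hq0 u) hG.le)
  -- measurability
  have hinnm : Measurable fun u : EuclideanSpace ℝ (Fin d) => ⟪u, g⟫ :=
    (continuous_id.inner continuous_const).measurable
  have hqm : Measurable fun u : EuclideanSpace ℝ (Fin d) => ⟪Hf x u, u⟫ :=
    ((Hf x).continuous.inner continuous_id).measurable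
  have hρm : Measurable ρ :=
    (hinnm.pow_const 2).div (hqm.mul_const _)
  have hφm : Measurable φ := by
    apply (hf.continuous.measurable).comp
    exact measurable_const.sub ((hinnm.div (measurable_const.mul hqm)).smul measurable_id)
  -- bounds on φ
  have hφub : ∀ u, φ u ≤ f x := by
    intro u
    rcases eq_or_ne u 0 with h | h
    · simp [hφdef, h]
    · have := descent u h
      have hnn : 0 ≤ ⟪u, g⟫ ^ 2 / ⟪Hf x u, u⟫ := div_nonneg (sq_nonneg _) (hq0 u)
      have hpos : 0 < 1 / (2 * Lhat) := by positivity
      nlinarith [this]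
  have hφlb : ∀ u, fstar ≤ φ u := fun u => hmin _
  -- integrability
  have hφint : Integrable φ D := by
    apply Integrable.mono' (integrable_const (max |fstar| |f x|))
      hφm.aestronglyMeasurable
    filter_upwards with u
    rw [Real.norm_eq_abs, abs_le]
    constructor
    · have := neg_abs_le fstar
      have h2 := hφlb u
      have := le_max_left |fstar| |f x|
      linarith
    · have := le_abs_self (f x)
      have := le_max_right |fstar| |f x|
      linarith [hφub u]
  have hρint : Integrable ρ D := by
    apply Integrable.mono' (integrable_const (1 : ℝ)) hρm.aestronglyMeasurable
    filter_upwards with u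
    rw [Real.norm_eq_abs, abs_le]
    exact ⟨by linarith [hρ0 u], hρ1 u⟩
  -- a.e. nonzero
  have hae : ∀ᵐ u ∂D, u ≠ 0 := by
    rw [ae_iff]
    convert hD0 using 2
    ext u
    simp
  -- a.e. pointwise bound
  have hpoint : ∀ᵐ u ∂D, φ u - fstar ≤ (1 - ρ u * μhat / Lhat) * Δ := by
    filter_upwards [hae] with u hu
    have hq : 0 < ⟪Hf x u, u⟫ := hpd x u hu
    have d1 := descent u hu
    have heq : ρ u * ⟪w, g⟫ = ⟪u, g⟫ ^ 2 / ⟪Hf x u, u⟫ := by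
      simp only [hρdef]
      rw [← div_div, div_mul_cancel₀ _ (ne_of_gt hG)]
    have d2 : φ u ≤ f x - 1 / (2 * Lhat) * (ρ u * ⟪w, g⟫) := by
      rw [heq]; exact d1
    have h5 : ρ u * (2 * μhat * Δ) ≤ ρ u * ⟪w, g⟫ :=
      mul_le_mul_of_nonneg_left hgap (hρ0 u)
    have h6 : 1 / (2 * Lhat) * (ρ u * (2 * μhat * Δ)) ≤ 1 / (2 * Lhat) * (ρ u * ⟪w, g⟫) :=
      mul_le_mul_of_nonneg_left h5 (by positivity)
    have h7 : 1 / (2 * Lhat) * (ρ u * (2 * μhat * Δ)) = ρ u * μhat / Lhat * Δ := by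
      field_simp
    have h8 : φ u ≤ f x - ρ u * μhat / Lhat * Δ := by linarith
    have : (1 - ρ u * μhat / Lhat) * Δ = Δ - ρ u * μhat / Lhat * Δ := by ring
    rw [this, hΔ]
    linarith
  -- integrate
  have hRHSint : Integrable (fun u => (1 - ρ u * μhat / Lhat) * Δ) D := by
    apply Integrable.mul_const
    exact (integrable_const 1).sub ((hρint.mul_const μhat).div_const Lhat)
  have hsubint : Integrable (fun u => φ u - fstar) D :=
    hφint.sub (integrable_const fstar)
  have hI : ∫ u, (φ u - fstar) ∂D ≤ ∫ u, (1 - ρ u * μhat / Lhat) * Δ ∂D :=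
    integral_mono_ae hsubint hRHSint hpoint
  have hIL : ∫ u, (φ u - fstar) ∂D = (∫ u, φ u ∂D) - fstar := by
    rw [integral_sub hφint (integrable_const fstar), integral_const]
    simp
  have hIR : ∫ u, (1 - ρ u * μhat / Lhat) * Δ ∂D
      = (1 - (∫ u, ρ u ∂D) * μhat / Lhat) * Δ := by
    rw [integral_mul_const]
    congr 1
    rw [integral_sub (integrable_const 1) ((hρint.mul_const μhat).div_const Lhat)]
    simp only [integral_const, measure_univ, ENNReal.toReal_one, smul_eq_mul, one_mul, probReal_univ, mul_one]
    congr 1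
    rw [integral_div, integral_mul_const]
  rw [hIL, hIR] at hI
  exact hI
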